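/- arXiv:1507.06760 — 4 statements merged into one kernel-verified Lean document; each statement's English description precedes it below -/
import Mathlib

section
/- Let A be an ℝ-algebra that is finite dimensional as an ℝ-vector space. The bilinear form (f, g) ↦ tr(L_{fg}) on A (where L_a denotes left multiplication by a, and tr is the trace of the ℝ-linear endomorphism) is positive semidefinite if and only if every maximal ideal of A has residue field ℝ (equivalently, every ℝ-algebra homomorphism A → ℂ has image contained in ℝ). -/
open Polynomial TensorProduct

set_option maxHeartbeats 1600000
set_option synthInstance.maxHeartbeats 400000

private lemma charpoly_eval_eq {n : ℕ} (N : Matrix (Fin n) (Fin n) ℂ) (μ : ℂ) :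
    N.charpoly.eval μ = (μ • (1 : Matrix (Fin n) (Fin n) ℂ) - N).det := by
  rw [Matrix.charpoly, ← Polynomial.coe_evalRingHom, RingHom.map_det]
  congr 1
  ext i j
  by_cases h : i = j <;>
    simp [Matrix.charmatrix_apply, Matrix.one_apply, Matrix.diagonal_apply, h]

private lemma isUnit_mulLeft_iff {B : Type*} [CommRing B] [Algebra ℂ B] (x : B) :
    IsUnit (LinearMap.mulLeft ℂ x) ↔ IsUnit x := by
  rw [Module.End.isUnit_iff]
  exact (IsUnit.isUnit_iff_mulLeft_bijective).symm

private lemma nonunit_iff_hom {A : Type*} [CommRing A] [Algebra ℝ A]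
    [FiniteDimensional ℝ A] (g : A) (μ : ℂ) :
    ¬ IsUnit ((algebraMap ℂ (ℂ ⊗[ℝ] A)) μ - (1 : ℂ) ⊗ₜ[ℝ] g) ↔
      ∃ χ : A →ₐ[ℝ] ℂ, χ g = μ := by
  constructor
  · intro hx
    obtain ⟨m, hm, hxm⟩ := exists_max_ideal_of_mem_nonunits hx
    haveI := hm
    letI : Field ((ℂ ⊗[ℝ] A) ⧸ m) := Ideal.Quotient.field m
    haveI : Module.Finite ℂ (ℂ ⊗[ℝ] A) :=
      Module.Finite.of_basis (Algebra.TensorProduct.basis ℂ (Module.finBasis ℝ A))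
    haveI : Module.Finite ℂ ((ℂ ⊗[ℝ] A) ⧸ m) :=
      Module.Finite.of_surjective (Ideal.Quotient.mkₐ ℂ m).toLinearMap
        (Ideal.Quotient.mkₐ_surjective ℂ m)
    haveI : Algebra.IsIntegral ℂ ((ℂ ⊗[ℝ] A) ⧸ m) := Algebra.IsIntegral.of_finite ℂ _
    have hsurj : Function.Surjective (algebraMap ℂ ((ℂ ⊗[ℝ] A) ⧸ m)) :=
      IsAlgClosed.algebraMap_bijective_of_isIntegral.2
    have hinj : Function.Injective (algebraMap ℂ ((ℂ ⊗[ℝ] A) ⧸ m)) :=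
      (algebraMap ℂ _).injective
    let e : ℂ ≃+* ((ℂ ⊗[ℝ] A) ⧸ m) := RingEquiv.ofBijective _ ⟨hinj, hsurj⟩
    have hmkalg : ∀ z : ℂ, Ideal.Quotient.mk m (algebraMap ℂ (ℂ ⊗[ℝ] A) z) = e z := by
      intro z; rfl
    let ρ : A →+* ℂ := e.symm.toRingHom.comp ((Ideal.Quotient.mk m).comp
      (Algebra.TensorProduct.includeRight (R := ℝ) (A := ℂ) (B := A)).toRingHom)
    have hρ : ∀ a : A, ρ a = e.symm (Ideal.Quotient.mk m ((1 : ℂ) ⊗ₜ[ℝ] a)) := by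
      intro a; rfl
    refine ⟨⟨ρ, ?_⟩, ?_⟩
    · intro r
      have h1 : ((1 : ℂ) ⊗ₜ[ℝ] (algebraMap ℝ A r) : ℂ ⊗[ℝ] A)
          = algebraMap ℂ (ℂ ⊗[ℝ] A) (algebraMap ℝ ℂ r) := by
        have := (Algebra.TensorProduct.includeRight (R := ℝ) (A := ℂ) (B := A)).commutes r
        simp only [Algebra.TensorProduct.includeRight_apply] at this
        rw [this, IsScalarTower.algebraMap_apply ℝ ℂ (ℂ ⊗[ℝ] A)]
      show ρ (algebraMap ℝ A r) = algebraMap ℝ ℂ r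
      rw [hρ, h1, hmkalg]
      exact e.symm_apply_apply _
    · have h2 : Ideal.Quotient.mk m ((1 : ℂ) ⊗ₜ[ℝ] g)
          = Ideal.Quotient.mk m (algebraMap ℂ (ℂ ⊗[ℝ] A) μ) := by
        rw [Ideal.Quotient.mk_eq_mk_iff_sub_mem]
        simpa using m.neg_mem hxm
      show ρ g = μ
      rw [hρ, h2, hmkalg]
      exact e.symm_apply_apply μ
  · rintro ⟨χ, hχ⟩ hx
    let ψ : (ℂ ⊗[ℝ] A) →ₐ[ℂ] ℂ :=
      Algebra.TensorProduct.lift (AlgHom.id ℂ ℂ) χ (fun _ _ => Commute.all _ _)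
    have hψ : ψ ((algebraMap ℂ (ℂ ⊗[ℝ] A)) μ - (1 : ℂ) ⊗ₜ[ℝ] g) = 0 := by
      rw [map_sub, AlgHom.commutes, Algebra.TensorProduct.lift_tmul]
      simp [hχ]
    have := hx.map ψ
    rw [hψ] at this
    exact not_isUnit_zero this

private lemma exists_multiset {A : Type*} [CommRing A] [Algebra ℝ A]
    [FiniteDimensional ℝ A] (g : A) :
    ∃ s : Multiset ℂ,
      LinearMap.trace ℝ A (LinearMap.mulLeft ℝ g) = (s.map Complex.re).sum ∧
      (∀ μ ∈ s, ∃ χ : A →ₐ[ℝ] ℂ, χ g = μ) ∧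
      (∀ χ : A →ₐ[ℝ] ℂ, χ g ∈ s) := by
  classical
  set b := Module.finBasis ℝ A with hb
  set M := LinearMap.toMatrix b b (LinearMap.mulLeft ℝ g) with hM
  set N := M.map (algebraMap ℝ ℂ) with hN
  set bB : Module.Basis (Fin (Module.finrank ℝ A)) ℂ (ℂ ⊗[ℝ] A) :=
    Algebra.TensorProduct.basis ℂ b with hbB
  have hbc : LinearMap.toMatrix bB bB ((LinearMap.mulLeft ℝ g).baseChange ℂ) = N :=
    LinearMap.toMatrix_baseChange ℂ _ b b
  have hmul : (LinearMap.mulLeft ℝ g).baseChange ℂ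
      = LinearMap.mulLeft ℂ ((1 : ℂ) ⊗ₜ[ℝ] g) := by
    apply LinearMap.ext
    intro z
    induction z using TensorProduct.induction_on with
    | zero => simp
    | tmul c a =>
        simp [Algebra.TensorProduct.tmul_mul_tmul]
    | add u v hu hv => rw [map_add, map_add, hu, hv]
  have key : ∀ μ : ℂ, N.charpoly.IsRoot μ ↔
      ¬ IsUnit ((algebraMap ℂ (ℂ ⊗[ℝ] A)) μ - (1 : ℂ) ⊗ₜ[ℝ] g) := by
    intro μ
    set x : ℂ ⊗[ℝ] A := (algebraMap ℂ (ℂ ⊗[ℝ] A)) μ - (1 : ℂ) ⊗ₜ[ℝ] g with hx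
    have h1 : LinearMap.mulLeft ℂ x
        = μ • (LinearMap.id : (ℂ ⊗[ℝ] A) →ₗ[ℂ] (ℂ ⊗[ℝ] A))
          - (LinearMap.mulLeft ℝ g).baseChange ℂ := by
      rw [hmul]
      apply LinearMap.ext
      intro z
      simp only [hx, LinearMap.mulLeft_apply, LinearMap.sub_apply, LinearMap.smul_apply,
        LinearMap.id_apply]
      rw [sub_mul]
      congr 1
      exact (Algebra.smul_def μ z).symm
    have h2 : LinearMap.toMatrix bB bB (LinearMap.mulLeft ℂ x)
        = μ • (1 : Matrix (Fin (Module.finrank ℝ A)) (Fin (Module.finrank ℝ A)) ℂ) - N := by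
      rw [h1, map_sub, map_smul, LinearMap.toMatrix_id, hbc]
    have h3 : N.charpoly.IsRoot μ ↔
        Matrix.det (LinearMap.toMatrix bB bB (LinearMap.mulLeft ℂ x)) = 0 := by
      rw [Polynomial.IsRoot, charpoly_eval_eq, h2]
    have htm : LinearMap.toMatrixAlgEquiv bB (LinearMap.mulLeft ℂ x)
        = LinearMap.toMatrix bB bB (LinearMap.mulLeft ℂ x) := rfl
    rw [h3]
    constructor
    · intro hdet hunit
      have hu2 := ((isUnit_mulLeft_iff x).mpr hunit).map (LinearMap.toMatrixAlgEquiv bB)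
      rw [htm] at hu2
      have := (Matrix.isUnit_iff_isUnit_det _).mp hu2
      rw [hdet] at this
      exact not_isUnit_zero this
    · intro hunit
      by_contra hdet
      apply hunit
      rw [← isUnit_mulLeft_iff x]
      have hU : IsUnit (LinearMap.toMatrix bB bB (LinearMap.mulLeft ℂ x)) :=
        (Matrix.isUnit_iff_isUnit_det _).mpr (isUnit_iff_ne_zero.mpr hdet)
      rw [← htm] at hU
      have := hU.map (LinearMap.toMatrixAlgEquiv bB).symm
      rwa [AlgEquiv.symm_apply_apply] at this
  refine ⟨N.charpoly.roots, ?_, ?_, ?_⟩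
  · have htr : LinearMap.trace ℝ A (LinearMap.mulLeft ℝ g) = M.trace :=
      LinearMap.trace_eq_matrix_trace ℝ b _
    have hNtr : N.trace = ((M.trace : ℝ) : ℂ) := by
      simp only [hN, Matrix.trace, Matrix.diag_apply, Matrix.map_apply]
      rw [show ((∑ x, M x x : ℝ) : ℂ) = algebraMap ℝ ℂ (∑ x, M x x) from rfl]
      exact (map_sum (algebraMap ℝ ℂ) _ _).symm
    have := Matrix.trace_eq_sum_roots_charpoly N
    rw [hNtr] at this
    have hre : (M.trace : ℝ) = (N.charpoly.roots.map Complex.re).sum := by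
      have h := congrArg Complex.re this
      rw [Complex.ofReal_re] at h
      rw [h]
      exact Complex.reAddGroupHom.map_multiset_sum _
    rw [htr, hre]
  · intro μ hμ
    exact (nonunit_iff_hom g μ).mp ((key μ).mp (Polynomial.isRoot_of_mem_roots hμ))
  · intro χ
    rw [Polynomial.mem_roots (Matrix.charpoly_monic N).ne_zero]
    exact (key (χ g)).mpr ((nonunit_iff_hom g (χ g)).mpr ⟨χ, rfl⟩)

private lemma multiset_sum_nonpos {t : Multiset ℝ} (h : ∀ r ∈ t, r ≤ 0) : t.sum ≤ 0 := by
  induction t using Multiset.induction_on with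
  | empty => simp
  | cons a t ih =>
    simp only [Multiset.sum_cons]
    have h1 := h a (Multiset.mem_cons_self a t)
    have h2 := ih (fun r hr => h r (Multiset.mem_cons_of_mem hr))
    linarith

/-- For a finite-dimensional commutative `ℝ`-algebra `A`, the trace bilinear form
`(f, g) ↦ tr(x ↦ f*g*x)` is positive semidefinite if and only if every
`ℝ`-algebra homomorphism `A → ℂ` has real image (i.e. all residue fields are `ℝ`). -/
theorem stmt_3 (A : Type*) [CommRing A] [Algebra ℝ A] [FiniteDimensional ℝ A] :
    (∀ f : A, 0 ≤ LinearMap.trace ℝ A (LinearMap.mulLeft ℝ (f * f))) ↔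
      (∀ φ : A →ₐ[ℝ] ℂ, ∀ a : A, (φ a).im = 0) := by
  constructor
  · intro h φ a
    by_contra him
    haveI : IsArtinianRing A := IsArtinianRing.of_finite ℝ A
    set m0 : Ideal A := RingHom.ker φ with hm0
    haveI hm0p : m0.IsPrime := RingHom.ker_isPrime φ
    haveI hm0max : m0.IsMaximal := IsArtinianRing.isMaximal_of_isPrime m0
    set t : ℝ := (φ a).im with ht
    have htne : t ≠ 0 := him
    set g : A := t⁻¹ • (a - algebraMap ℝ A ((φ a).re)) with hg
    have hφg : φ g = Complex.I := by
      rw [hg, map_smul, map_sub, AlgHom.commutes]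
      rw [Complex.ext_iff]
      constructor
      · simp [Complex.smul_re]
      · simp only [Complex.smul_im, Complex.sub_im, Complex.I_im]
        simp [← ht, inv_mul_cancel₀ htne]
    have hfin : {I : Ideal A | I.IsMaximal ∧ I ≠ m0}.Finite :=
      (IsArtinianRing.setOfPred_isMaximal_finite A).subset fun I hI => hI.1
    classical
    set s : Finset (Ideal A) := hfin.toFinset with hs
    have hmem_s : ∀ I : Ideal A, I ∈ s ↔ I.IsMaximal ∧ I ≠ m0 := fun I =>
      hfin.mem_toFinset
    have hchoice : ∀ I : Ideal A, ∃ x : A, (I.IsMaximal ∧ I ≠ m0) → (x ∈ I ∧ x ∉ m0) := by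
      intro I
      by_cases hI : I.IsMaximal ∧ I ≠ m0
      · have hnle : ¬ I ≤ m0 := by
          intro hle
          exact hI.2 (hI.1.eq_of_le hm0max.ne_top hle)
        obtain ⟨x, hx1, hx2⟩ := SetLike.not_le_iff_exists.mp hnle
        exact ⟨x, fun _ => ⟨hx1, hx2⟩⟩
      · exact ⟨0, fun hc => absurd hc hI⟩
    choose xx hxx using hchoice
    set u0 : A := ∏ I ∈ s, xx I with hu0
    have hu0nm0 : u0 ∉ m0 := by
      intro hmem
      obtain ⟨I, hIs, hIxm0⟩ := Ideal.IsPrime.prod_mem_iff.mp hmem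
      exact (hxx I ((hmem_s I).mp hIs)).2 hIxm0
    have hu0mem : ∀ I ∈ s, u0 ∈ I := by
      intro I hIs
      rw [hu0, ← Finset.mul_prod_erase s _ hIs]
      exact Ideal.mul_mem_right _ _ (hxx I ((hmem_s I).mp hIs)).1
    obtain ⟨c, y, hy, hcy⟩ := hm0max.exists_inv hu0nm0
    set f : A := g * (c * u0) with hf
    have hφu : φ (c * u0) = 1 := by
      have hcu : c * u0 = 1 - y := eq_sub_of_add_eq hcy
      have hφy : φ y = 0 := RingHom.mem_ker.mp hy
      rw [hcu, map_sub, map_one, hφy, sub_zero]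
    have hφf : φ f = Complex.I := by rw [hf, map_mul, hφg, hφu, mul_one]
    have hφff : φ (f * f) = -1 := by
      rw [map_mul, hφf, Complex.I_mul_I]
    have hval : ∀ χ : A →ₐ[ℝ] ℂ, χ (f * f) = -1 ∨ χ (f * f) = 0 := by
      intro χ
      haveI hkerp : (RingHom.ker χ).IsPrime := RingHom.ker_isPrime χ
      by_cases hk : RingHom.ker χ = m0
      · left
        have hmem : f * f + 1 ∈ RingHom.ker χ := by
          rw [hk]
          show φ (f * f + 1) = 0
          rw [map_add, hφff, map_one, neg_add_cancel]
        have h0 : χ (f * f) + 1 = 0 := by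
          have := RingHom.mem_ker.mp hmem
          simpa using this
        linear_combination h0
      · right
        haveI : (RingHom.ker χ).IsMaximal :=
          IsArtinianRing.isMaximal_of_isPrime (RingHom.ker χ)
        have hks : RingHom.ker χ ∈ s := (hmem_s _).mpr ⟨this, hk⟩
        have hu0k : u0 ∈ RingHom.ker χ := hu0mem _ hks
        have hffk : f * f ∈ RingHom.ker χ := by
          have hrw : f * f = g * c * (g * (c * u0)) * u0 := by rw [hf]; ring
          rw [hrw]
          exact Ideal.mul_mem_left _ _ hu0k
        exact RingHom.mem_ker.mp hffk
    obtain ⟨sμ, hsum, hroots, hin⟩ := exists_multiset (f * f)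
    have hmemneg : (-1 : ℂ) ∈ sμ := hφff ▸ hin φ
    obtain ⟨tμ, htμ⟩ := Multiset.exists_cons_of_mem hmemneg
    have hsum' : (sμ.map Complex.re).sum = -1 + (tμ.map Complex.re).sum := by
      rw [htμ]
      simp
    have htle : (tμ.map Complex.re).sum ≤ 0 := by
      apply multiset_sum_nonpos
      intro r hr
      obtain ⟨μ, hμt, rfl⟩ := Multiset.mem_map.mp hr
      have hμs : μ ∈ sμ := htμ ▸ Multiset.mem_cons_of_mem hμt
      obtain ⟨χ, hχ⟩ := hroots μ hμs
      rcases hval χ with h1 | h1 <;> rw [← hχ, h1] <;> norm_num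
    have hfinal := h f
    rw [hsum, hsum'] at hfinal
    linarith
  · intro hreal f
    obtain ⟨s, hsum, hroots, -⟩ := exists_multiset (f * f)
    rw [hsum]
    apply Multiset.sum_nonneg
    intro x hx
    obtain ⟨μ, hμs, rfl⟩ := Multiset.mem_map.mp hx
    obtain ⟨χ, hχ⟩ := hroots μ hμs
    have h0 : (χ f).im = 0 := hreal χ f
    rw [← hχ, map_mul, Complex.mul_re, h0]
    simpa using mul_self_nonneg (χ f).re
end

section
/- Let f : X → Y be a holomorphic map between Riemann surfaces, p a point with f(p) real in the following sense: X and Y carry antiholomorphic involutions τ, σ with f∘τ = σ∘f and p, f(p) are fixed points. If f maps only fixed points to fixed points (real fibered) near p, then the derivative of f at p is nonzero. Concretely: if f is a nonconstant holomorphic function on a neighborhood of 0 in ℂ with real Taylor coefficients such that f(z) ∈ ℝ implies z ∈ ℝ for z near 0, and f(0) = 0, then f'(0) ≠ 0. -/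
open Complex Filter Set

/-- Let `f` be holomorphic on a disc around `0` in `ℂ` with `f 0 = 0`, all Taylor
coefficients of `f` at `0` real, and suppose that near `0`, `f z ∈ ℝ` implies
`z ∈ ℝ` (real fiberedness). If `f` is nonconstant on the disc, then `f'(0) ≠ 0`. -/
theorem stmt_8 (f : ℂ → ℂ) (r : ℝ) (hr : 0 < r)
    (hol : ∀ z ∈ Metric.ball (0 : ℂ) r, AnalyticAt ℂ f z)
    (h0 : f 0 = 0)
    (hreal : ∀ n : ℕ, (iteratedDeriv n f 0).im = 0)
    (hfib : ∀ z ∈ Metric.ball (0 : ℂ) r, (f z).im = 0 → z.im = 0)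
    (hnc : ∃ z ∈ Metric.ball (0 : ℂ) r, f z ≠ 0) :
    deriv f 0 ≠ 0 := by
  intro hd
  have h0m : (0 : ℂ) ∈ Metric.ball (0 : ℂ) r := Metric.mem_ball_self hr
  have hf0 : AnalyticAt ℂ f 0 := hol 0 h0m
  have hball : AnalyticOnNhd ℂ f (Metric.ball 0 r) := hol
  -- the order of vanishing is finite
  have hord : analyticOrderAt f 0 ≠ ⊤ := by
    intro htop
    rw [analyticOrderAt_eq_top] at htop
    obtain ⟨z, hz, hfz⟩ := hnc
    exact hfz (hball.eqOn_zero_of_preconnected_of_eventuallyEq_zero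
      (convex_ball (0 : ℂ) r).isPreconnected h0m htop hz)
  obtain ⟨n, hn⟩ := WithTop.ne_top_iff_exists.mp hord
  obtain ⟨g, hg, hg0, hfg⟩ := (hf0.analyticOrderAt_eq_natCast (n := n)).mp hn.symm
  have hfg' : ∀ᶠ z in nhds (0 : ℂ), f z = z ^ n * g z := by
    filter_upwards [hfg] with z hz
    simpa [smul_eq_mul] using hz
  -- n ≠ 0
  have hn0 : n ≠ 0 := by
    intro h
    have := hfg'.self_of_nhds
    rw [h, pow_zero, one_mul, h0] at this
    exact hg0 this.symm
  -- n ≠ 1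
  have hn1 : n ≠ 1 := by
    intro h
    have hde : deriv f 0 = deriv (fun z : ℂ => z ^ n * g z) 0 :=
      Filter.EventuallyEq.deriv_eq hfg'
    have hgd : HasDerivAt g (deriv g 0) 0 := hg.differentiableAt.hasDerivAt
    have : HasDerivAt (fun z : ℂ => z ^ n * g z) (g 0) 0 := by
      subst h
      have := ((hasDerivAt_id (0 : ℂ)).mul hgd)
      simpa [Pi.mul_def] using this
    rw [hde, this.deriv] at hd
    exact hg0 hd
  have hn2 : 2 ≤ n := by omega
  set c := g 0 with hc
  -- pick ψ ∈ (0, π/2] with Im (e^{iψ} c) ≠ 0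
  have hψex : ∃ ψ : ℝ, 0 < ψ ∧ ψ ≤ Real.pi / 2 ∧
      Real.cos ψ * c.im + Real.sin ψ * c.re ≠ 0 := by
    by_cases hre : c.re = 0
    · refine ⟨Real.pi / 3, by positivity, by linarith [Real.pi_pos], ?_⟩
      rw [Real.cos_pi_div_three, hre]
      have him : c.im ≠ 0 := by
        intro h
        exact hg0 (Complex.ext hre h)
      intro h
      apply him
      nlinarith
    · refine ⟨Real.pi / 2, by positivity, le_refl _, ?_⟩
      rw [Real.cos_pi_div_two, Real.sin_pi_div_two]
      simpa using hre
  obtain ⟨ψ, hψ0, hψle, hL⟩ := hψex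
  set L := Real.cos ψ * c.im + Real.sin ψ * c.re with hLdef
  set θ₀ := ψ / n with hθ₀
  set θ₁ := (ψ + Real.pi) / n with hθ₁
  have hnpos : (0 : ℝ) < n := by positivity
  have hθ₀pos : 0 < θ₀ := by positivity
  have hθ₀₁ : θ₀ < θ₁ := by
    rw [hθ₀, hθ₁]
    gcongr
    · linarith [Real.pi_pos]
  have hθ₁lt : θ₁ < Real.pi := by
    have h2n : (2 : ℝ) ≤ n := by exact_mod_cast hn2
    rw [hθ₁, div_lt_iff₀ hnpos]
    nlinarith [Real.pi_pos]
  -- the auxiliary function q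
  set q : ℝ → ℝ → ℝ := fun θ t =>
    (Complex.exp ((n * θ : ℝ) * Complex.I) * g ((t : ℂ) * Complex.exp ((θ : ℝ) * Complex.I))).im
    with hq
  have hnθ₀ : (n : ℝ) * θ₀ = ψ := by
    rw [hθ₀]; field_simp
  have hnθ₁ : (n : ℝ) * θ₁ = ψ + Real.pi := by
    rw [hθ₁]; field_simp
  have hexpψ : (Complex.exp ((ψ : ℝ) * Complex.I) * c).im = L := by
    rw [Complex.mul_im, Complex.exp_ofReal_mul_I_re, Complex.exp_ofReal_mul_I_im]
  have hq0 : q θ₀ 0 = L := by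
    simp only [hq, Complex.ofReal_zero, zero_mul, hnθ₀]
    rw [show g 0 = c from rfl] at *
    exact hexpψ
  have hq1 : q θ₁ 0 = -L := by
    simp only [hq, Complex.ofReal_zero, zero_mul, hnθ₁]
    rw [Complex.ofReal_add, add_mul, Complex.exp_add, Complex.exp_pi_mul_I]
    rw [show g 0 = c from rfl]
    rw [mul_neg_one, neg_mul, Complex.neg_im, hexpψ]
  -- continuity of q θ at t = 0
  have hqcont : ∀ θ : ℝ, ContinuousAt (q θ) 0 := by
    intro θ
    have hw : ContinuousAt (fun t : ℝ => (t : ℂ) * Complex.exp ((θ : ℝ) * Complex.I)) 0 :=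
      (Complex.continuous_ofReal.mul continuous_const).continuousAt
    have hgc : ContinuousAt g (((0 : ℝ) : ℂ) * Complex.exp ((θ : ℝ) * Complex.I)) := by
      simpa using hg.continuousAt
    exact Complex.continuous_im.continuousAt.comp
      (continuousAt_const.mul (ContinuousAt.comp (x := (0 : ℝ)) hgc hw))
  -- eventually near 0 conditions
  obtain ⟨δ, hδpos, hδ⟩ := Metric.eventually_nhds_iff.mp hfg'
  have hLabs : 0 < |L| := abs_pos.mpr hL
  have E0 : ∀ᶠ t in nhds (0 : ℝ), |q θ₀ t - L| < |L| := by
    have := (hqcont θ₀)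
    rw [ContinuousAt, hq0] at this
    have := Metric.tendsto_nhds.mp this |L| hLabs
    simpa [Real.dist_eq] using this
  have E1 : ∀ᶠ t in nhds (0 : ℝ), |q θ₁ t + L| < |L| := by
    have := (hqcont θ₁)
    rw [ContinuousAt, hq1] at this
    have := Metric.tendsto_nhds.mp this |L| hLabs
    simpa [Real.dist_eq, sub_neg_eq_add] using this
  have Esmall : ∀ᶠ t in nhds (0 : ℝ), |t| < min r δ := by
    have : Tendsto (fun t : ℝ => |t|) (nhds 0) (nhds 0) := by
      simpa using (_root_.continuous_abs.tendsto (0 : ℝ))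
    exact Filter.Tendsto.eventually_lt_const (lt_min hr hδpos) this
  obtain ⟨t, ⟨hE0, hE1, hsmall⟩, htpos⟩ :=
    ((eventually_nhdsWithin_of_eventually_nhds (s := Set.Ioi (0 : ℝ)) (E0.and (E1.and Esmall))).and
      self_mem_nhdsWithin).exists
  have htpos' : 0 < t := htpos
  rw [abs_of_pos htpos', lt_min_iff] at hsmall
  obtain ⟨htr, htδ⟩ := hsmall
  -- points on the circle of radius t are in the ball
  have hmem : ∀ θ : ℝ, ((t : ℂ) * Complex.exp ((θ : ℝ) * Complex.I)) ∈ Metric.ball (0 : ℂ) r := by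
    intro θ
    rw [Metric.mem_ball, dist_zero_right, norm_mul, Complex.norm_real, Real.norm_eq_abs,
      Complex.norm_exp_ofReal_mul_I, mul_one, abs_of_pos htpos']
    exact htr
  -- value of Im f on the circle
  have hval : ∀ θ : ℝ, (f ((t : ℂ) * Complex.exp ((θ : ℝ) * Complex.I))).im = t ^ n * q θ t := by
    intro θ
    have hdist : dist ((t : ℂ) * Complex.exp ((θ : ℝ) * Complex.I)) 0 < δ := by
      rw [dist_zero_right, norm_mul, Complex.norm_real, Real.norm_eq_abs,
        Complex.norm_exp_ofReal_mul_I, mul_one, abs_of_pos htpos']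
      exact htδ
    rw [hδ hdist]
    have hpow : ((t : ℂ) * Complex.exp ((θ : ℝ) * Complex.I)) ^ n
        = ((t ^ n : ℝ) : ℂ) * Complex.exp (((n * θ : ℝ)) * Complex.I) := by
      rw [mul_pow, ← Complex.exp_nat_mul]
      push_cast
      ring_nf
    rw [hpow, mul_assoc, Complex.im_ofReal_mul]
  -- zero is between the two endpoint values
  have htn : 0 < t ^ n := pow_pos htpos' n
  rw [abs_lt] at hE0 hE1
  have h0mem : (0 : ℝ) ∈ Set.uIcc (t ^ n * q θ₀ t) (t ^ n * q θ₁ t) := by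
    rw [Set.mem_uIcc]
    rcases lt_or_gt_of_ne hL with h | h
    · have habs : |L| = -L := abs_of_neg h
      rw [habs] at hE0 hE1
      left
      refine ⟨mul_nonpos_iff.mpr (Or.inl ⟨htn.le, by linarith [hE0.2]⟩),
        mul_nonneg htn.le (by linarith [hE1.1])⟩
    · have habs : |L| = L := abs_of_pos h
      rw [habs] at hE0 hE1
      right
      refine ⟨mul_nonpos_iff.mpr (Or.inl ⟨htn.le, by linarith [hE1.2]⟩),
        mul_nonneg htn.le (by linarith [hE0.1])⟩
  -- intermediate value theorem along the arc
  have hcont : ContinuousOn (fun θ : ℝ => (f ((t : ℂ) * Complex.exp ((θ : ℝ) * Complex.I))).im)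
      (Set.uIcc θ₀ θ₁) := by
    intro θ _
    have hw : ContinuousAt (fun θ : ℝ => (t : ℂ) * Complex.exp ((θ : ℝ) * Complex.I)) θ :=
      (continuous_const.mul (Complex.continuous_exp.comp
        (Complex.continuous_ofReal.mul continuous_const))).continuousAt
    exact (Complex.continuous_im.continuousAt.comp
      (ContinuousAt.comp (x := θ) ((hol _ (hmem θ)).continuousAt) hw)).continuousWithinAt
  have h0mem' : (0 : ℝ) ∈ Set.uIcc
      ((f ((t : ℂ) * Complex.exp ((θ₀ : ℝ) * Complex.I))).im)
      ((f ((t : ℂ) * Complex.exp ((θ₁ : ℝ) * Complex.I))).im) := by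
    rw [hval θ₀, hval θ₁]
    exact h0mem
  obtain ⟨θs, hθs, hfθs⟩ := intermediate_value_uIcc hcont h0mem'
  rw [Set.uIcc_of_le hθ₀₁.le] at hθs
  have hzim : ((t : ℂ) * Complex.exp ((θs : ℝ) * Complex.I)).im = 0 :=
    hfib _ (hmem θs) hfθs
  have hsin : 0 < Real.sin θs :=
    Real.sin_pos_of_pos_of_lt_pi (lt_of_lt_of_le hθ₀pos hθs.1) (lt_of_le_of_lt hθs.2 hθ₁lt)
  rw [Complex.im_ofReal_mul, Complex.exp_ofReal_mul_I_im] at hzim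
  nlinarith
end

section
/- A nonconstant polynomial f ∈ ℝ[z] with the property that for all z ∈ ℂ, f(z) ∈ ℝ implies z ∈ ℝ, has nonvanishing derivative at every real point: f'(x) ≠ 0 for all x ∈ ℝ. -/
open Polynomial Complex

/-- For nonzero `a`, there is a unit `w ≠ 1` with `(a*w).im < 0`. -/
lemma aux_exists_unit (a : ℂ) (ha : a ≠ 0) :
    ∃ w : ℂ, ‖w‖ = 1 ∧ w ≠ 1 ∧ (a * w).im < 0 := by
  have habs : (0:ℝ) < ‖a‖ := by
    simpa [norm_pos_iff] using ha
  set w1 : ℂ := -Complex.I * (starRingEnd ℂ a) / ((‖a‖ : ℝ) : ℂ) with hw1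
  have hne : ((‖a‖ : ℝ) : ℂ) ≠ 0 := by exact_mod_cast habs.ne'
  have haw1 : a * w1 = -Complex.I * ((‖a‖ : ℝ) : ℂ) := by
    have h2 : a * (starRingEnd ℂ) a = ((‖a‖ : ℝ) : ℂ) * ((‖a‖ : ℝ) : ℂ) := by
      rw [Complex.mul_conj]; norm_cast; rw [Complex.normSq_eq_norm_sq]; ring
    rw [hw1, ← mul_div_assoc, div_eq_iff hne]
    linear_combination (-Complex.I) * h2
  have hw1abs : ‖w1‖ = 1 := by
    rw [hw1]
    simp [map_div₀, Complex.norm_conj]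
    exact ha
  have him1 : (a * w1).im = -‖a‖ := by
    rw [haw1]; simp
  by_cases h1 : w1 = 1
  · refine ⟨Complex.exp Complex.I, ?_, ?_, ?_⟩
    · simpa using Complex.norm_exp_ofReal_mul_I 1
    · intro h
      have := congrArg Complex.im h
      rw [Complex.exp_im] at this
      simp at this
      exact Real.sin_pos_of_pos_of_lt_pi one_pos (by linarith [Real.pi_gt_three]) |>.ne' this
    · have : a * Complex.exp Complex.I = a * w1 * Complex.exp Complex.I := by
        rw [h1]; ring
      rw [this, haw1]
      have hre : (Complex.exp Complex.I).re = Real.cos 1 := by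
        rw [Complex.exp_re]; simp
      have him : (Complex.exp Complex.I).im = Real.sin 1 := by
        rw [Complex.exp_im]; simp
      have : (-Complex.I * ((‖a‖ : ℝ) : ℂ) * Complex.exp Complex.I).im
          = -(‖a‖) * Real.cos 1 := by
        simp [Complex.mul_im, Complex.mul_re, hre, him]
      rw [this]
      have hc : (0:ℝ) < Real.cos 1 := Real.cos_pos_of_mem_Ioo
        ⟨by linarith [Real.pi_gt_three], by linarith [Real.pi_gt_three]⟩
      nlinarith
  · exact ⟨w1, hw1abs, h1, by rw [him1]; linarith⟩

/-- For `m ≥ 2` and a unit `w ≠ 1`, there is `θ ∈ (0, π)` with `exp((m θ) I) = w`. -/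
lemma aux_exists_angle (m : ℕ) (hm : 2 ≤ m) (w : ℂ) (hw : ‖w‖ = 1)
    (hw1 : w ≠ 1) :
    ∃ θ : ℝ, 0 < θ ∧ θ < Real.pi ∧ Complex.exp ((m * θ : ℝ) * Complex.I) = w := by
  have hmpos : (0:ℝ) < m := by positivity
  set s := Complex.arg w with hs
  have hws : Complex.exp (s * Complex.I) = w := by
    have := Complex.norm_mul_exp_arg_mul_I w
    rwa [hw, Complex.ofReal_one, one_mul] at this
  have hs_ne : s ≠ 0 := by
    intro h0
    apply hw1
    rw [← hws, h0]
    simp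
  have hs_le : s ≤ Real.pi := Complex.arg_le_pi w
  have hs_gt : -Real.pi < s := Complex.neg_pi_lt_arg w
  have hpi := Real.pi_pos
  rcases lt_or_gt_of_ne hs_ne with hneg | hpos
  · refine ⟨(s + 2 * Real.pi) / m, div_pos (by linarith) hmpos, ?_, ?_⟩
    · have h2m : (2:ℝ) ≤ m := by exact_mod_cast hm
      rw [div_lt_iff₀ hmpos]
      nlinarith
    · have : (m : ℝ) * ((s + 2 * Real.pi) / m) = s + 2 * Real.pi := by
        field_simp
      rw [this]
      push_cast
      rw [add_mul, Complex.exp_add, hws, Complex.exp_two_pi_mul_I, mul_one]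
  · refine ⟨s / m, by positivity, ?_, ?_⟩
    · have h2m : (2:ℝ) ≤ m := by exact_mod_cast hm
      rw [div_lt_iff₀ hmpos]
      nlinarith
    · have : (m : ℝ) * (s / m) = s := by field_simp
      rw [this, hws]

/-- A nonconstant real polynomial `f` such that `f(z) ∈ ℝ` implies `z ∈ ℝ`
(for all complex `z`) has nonvanishing derivative at every real point. -/
theorem stmt_9 (f : Polynomial ℝ) (hf : 0 < f.natDegree)
    (hrf : ∀ z : ℂ, (Polynomial.eval z (f.map (algebraMap ℝ ℂ))).im = 0 → z.im = 0) :
    ∀ x : ℝ, Polynomial.eval x (Polynomial.derivative f) ≠ 0 := by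
  intro x hx
  set F : Polynomial ℂ := f.map (algebraMap ℝ ℂ) with hF
  set z0 : ℂ := ((x : ℝ) : ℂ) with hz0
  set c0 : ℂ := F.eval z0 with hc0
  have hc0' : c0 = ((f.eval x : ℝ) : ℂ) := by
    rw [hc0, hF, hz0, Polynomial.eval_map,
      show ((x:ℝ):ℂ) = algebraMap ℝ ℂ x from rfl, Polynomial.eval₂_at_apply]
    rfl
  set g : Polynomial ℂ := F - Polynomial.C c0 with hg
  have hFdeg : F.natDegree = f.natDegree := Polynomial.natDegree_map (algebraMap ℝ ℂ)
  have hg0 : g ≠ 0 := by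
    intro h
    have : F = Polynomial.C c0 := by rwa [hg, sub_eq_zero] at h
    have := congrArg Polynomial.natDegree this
    rw [hFdeg, Polynomial.natDegree_C] at this
    omega
  have hroot : g.IsRoot z0 := by simp [hg, Polynomial.IsRoot, hc0]
  have hder : (Polynomial.derivative g).IsRoot z0 := by
    have h1 : Polynomial.derivative g = (Polynomial.derivative f).map (algebraMap ℝ ℂ) := by
      rw [hg, Polynomial.derivative_sub, Polynomial.derivative_C, sub_zero, hF,
        Polynomial.derivative_map]
    rw [Polynomial.IsRoot, h1, hz0, Polynomial.eval_map,
      show ((x:ℝ):ℂ) = algebraMap ℝ ℂ x from rfl, Polynomial.eval₂_at_apply, hx]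
    simp
  set m : ℕ := g.rootMultiplicity z0 with hm
  have hm2 : 2 ≤ m := by
    have := (Polynomial.one_lt_rootMultiplicity_iff_isRoot hg0).2 ⟨hroot, hder⟩
    omega
  set q : Polynomial ℂ := g /ₘ (Polynomial.X - Polynomial.C z0) ^ m with hq
  have hfact : (Polynomial.X - Polynomial.C z0) ^ m * q = g :=
    Polynomial.pow_mul_divByMonic_rootMultiplicity_eq g z0
  set a : ℂ := q.eval z0 with ha_def
  have ha : a ≠ 0 := Polynomial.eval_divByMonic_pow_rootMultiplicity_ne_zero z0 hg0
  set v : ℂ → ℝ := fun z => (F.eval z).im with hv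
  have hvg : ∀ z : ℂ, v z = (g.eval z).im := by
    intro z
    rw [hv, hg]
    simp [hc0']
  -- key construction
  have key : ∀ w : ℂ, ‖w‖ = 1 → w ≠ 1 → (a * w).im ≠ 0 →
      ∃ z : ℂ, 0 < z.im ∧ 0 < v z * (a * w).im := by
    intro w hwabs hw1 hwim
    obtain ⟨θ, hθ0, hθπ, hθw⟩ := aux_exists_angle m hm2 w hwabs hw1
    set e : ℂ := Complex.exp ((θ : ℝ) * Complex.I) with he
    have hem : e ^ m = w := by
      rw [he, ← Complex.exp_nat_mul, ← hθw]
      norm_num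
      ring_nf
    set c : ℝ → ℝ := fun ε => (w * q.eval (z0 + ε * e)).im with hc
    have hcc : Continuous c := by
      apply Complex.continuous_im.comp
      exact (continuous_const.mul ((q.continuous).comp
        (continuous_const.add ((Complex.continuous_ofReal).mul continuous_const))))
    have hc0v : c 0 = (a * w).im := by
      rw [hc]; simp [ha_def, mul_comm]
    have hcont : ContinuousAt (fun ε => c ε * c 0) 0 :=
      ((hcc.mul continuous_const).continuousAt)
    have hpos0 : 0 < c 0 * c 0 := mul_self_pos.mpr (by rw [hc0v]; exact hwim)
    obtain ⟨δ, hδ, hball⟩ : ∃ δ > 0, ∀ ε : ℝ, |ε| < δ → 0 < c ε * c 0 := by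
      obtain ⟨δ, hδ, H⟩ := Metric.continuousAt_iff.mp hcont (c 0 * c 0) hpos0
      refine ⟨δ, hδ, fun ε hε => ?_⟩
      have := H (by simpa [Real.dist_eq] using hε)
      rw [Real.dist_eq] at this
      have := abs_lt.mp this
      linarith [this.1]
    set ε : ℝ := δ / 2 with hε
    have hεpos : 0 < ε := by positivity
    have hcε : 0 < c ε * c 0 := hball ε (by rw [abs_of_pos hεpos]; linarith)
    refine ⟨z0 + (ε : ℂ) * e, ?_, ?_⟩
    · have heim : e.im = Real.sin θ := Complex.exp_ofReal_mul_I_im θ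
      have : (z0 + (ε : ℂ) * e).im = ε * Real.sin θ := by
        simp [hz0, Complex.add_im, Complex.mul_im, heim]
      rw [this]
      exact mul_pos hεpos (Real.sin_pos_of_pos_of_lt_pi hθ0 hθπ)
    · have hgeval : g.eval (z0 + (ε : ℂ) * e) =
          ((ε : ℂ) ^ m) * (w * q.eval (z0 + (ε : ℂ) * e)) := by
        conv_lhs => rw [← hfact]
        rw [Polynomial.eval_mul, Polynomial.eval_pow, Polynomial.eval_sub,
          Polynomial.eval_X, Polynomial.eval_C, add_sub_cancel_left, mul_pow, hem]
        ring
      have hvz : v (z0 + (ε : ℂ) * e) = ε ^ m * c ε := by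
        rw [hvg, hgeval, hc,
          show ((ε : ℂ) ^ m) = ((ε ^ m : ℝ) : ℂ) by push_cast; ring,
          Complex.im_ofReal_mul]
      rw [hvz, ← hc0v]
      have : ε ^ m * c ε * c 0 = ε ^ m * (c ε * c 0) := by ring
      rw [mul_assoc]
      exact mul_pos (pow_pos hεpos m) hcε
  -- produce points of both signs in the upper half plane
  obtain ⟨wn, hwnabs, hwn1, hwn⟩ := aux_exists_unit a ha
  obtain ⟨zn, hznim, hznv⟩ := key wn hwnabs hwn1 hwn.ne
  have hvzn : v zn < 0 := by nlinarith
  obtain ⟨wp, hwpabs, hwp1, hwp⟩ := aux_exists_unit (-a) (neg_ne_zero.mpr ha)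
  have hwp' : 0 < (a * wp).im := by
    rw [neg_mul, Complex.neg_im] at hwp; linarith
  obtain ⟨zp, hzpim, hzpv⟩ := key wp hwpabs hwp1 hwp'.ne'
  have hvzp : 0 < v zp := by nlinarith
  -- intermediate value on the (convex, hence preconnected) upper half plane
  have hpc : IsPreconnected {z : ℂ | 0 < z.im} :=
    (convex_halfSpace_im_gt (0:ℝ)).isPreconnected
  have hcv : ContinuousOn v {z : ℂ | 0 < z.im} :=
    (Complex.continuous_im.comp F.continuous).continuousOn
  have h0mem : (0:ℝ) ∈ Set.Icc (v zn) (v zp) := ⟨le_of_lt hvzn, le_of_lt hvzp⟩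
  have := hpc.intermediate_value hznim hzpim hcv h0mem
  obtain ⟨z, hzmem, hzv⟩ := this
  have : z.im = 0 := hrf z hzv
  exact absurd this (ne_of_gt hzmem)
end

section
/- Let p(s,t) and q(s,t) be real homogeneous polynomials of the same degree with no common projective zero such that for all (λ:μ) ∈ ℙ¹(ℝ), all projective zeros of λp + μq are real. Then at every real projective zero x of p, the derivative of the rational function p/q (in an affine chart) is nonzero; equivalently, p and q have no common zero and all zeros of p are simple. -/
open MvPolynomial

/-- `z ∈ ℂ² ∖ {0}` represents a real point of `ℙ¹`. -/
def IsRealProjPoint2 (z : Fin 2 → ℂ) : Prop :=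
  ∃ (w : Fin 2 → ℝ) (c : ℂ), c ≠ 0 ∧ z = c • fun i => (w i : ℂ)

namespace Stmt11Aux

lemma im_ofReal_mul_I_mul (r : ℝ) (ζ : ℂ) : ((r : ℂ) * (Complex.I * ζ)).im = r * ζ.re := by
  simp [Complex.mul_im, Complex.mul_re]

lemma im_ofReal_mul_negI_mul (r : ℝ) (ζ : ℂ) :
    ((r : ℂ) * (-Complex.I * ζ)).im = -(r * ζ.re) := by
  simp [Complex.mul_im, Complex.mul_re]

lemma polyEval_aeval' (v : Fin 2 → Polynomial ℂ) (f : MvPolynomial (Fin 2) ℂ) (u : ℂ) :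
    Polynomial.eval u (MvPolynomial.aeval v f) = eval (fun i => Polynomial.eval u (v i)) f := by
  induction f using MvPolynomial.induction_on with
  | C a => simp
  | add f g hf hg => simp [hf, hg]
  | mul_X f i hf => simp [hf]

lemma mvEval_aeval (v : Fin 2 → MvPolynomial (Fin 2) ℂ)
    (f : MvPolynomial (Fin 2) ℂ) (z : Fin 2 → ℂ) :
    eval z (MvPolynomial.aeval v f) = eval (fun i => eval z (v i)) f := by
  induction f using MvPolynomial.induction_on with
  | C a => simp
  | add f g hf hg => rw [map_add, map_add, hf, hg, map_add]
  | mul_X f i hf => rw [map_mul, aeval_X, eval_mul, hf, eval_mul, eval_X]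

lemma polyEval_map_aeval (v : Fin 2 → Polynomial ℝ) (f : MvPolynomial (Fin 2) ℝ) (u : ℂ) :
    Polynomial.eval u (Polynomial.map (algebraMap ℝ ℂ) (MvPolynomial.aeval v f)) =
      eval (fun i => Polynomial.eval u (Polynomial.map (algebraMap ℝ ℂ) (v i)))
        (map (algebraMap ℝ ℂ) f) := by
  induction f using MvPolynomial.induction_on with
  | C a => simp
  | add f g hf hg => simp [hf, hg]
  | mul_X f i hf => simp [hf]

lemma eval_smul_isHomog {A : MvPolynomial (Fin 2) ℂ} {n : ℕ} (hA : A.IsHomogeneous n)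
    (c : ℂ) (z : Fin 2 → ℂ) : eval (c • z) A = c ^ n * eval z A := by
  rw [eval_eq', eval_eq', Finset.mul_sum]
  apply Finset.sum_congr rfl
  intro d hd
  have hdeg : ∑ i, d i = n := by
    have h1 := hA (mem_support_iff.mp hd)
    rw [← h1]
    rw [Finsupp.weight_apply, Finsupp.sum]
    rw [Finset.sum_subset (Finset.subset_univ d.support)]
    · simp
    · intro x _ hx
      simp [Finsupp.notMem_support_iff.mp hx]
  have : ∏ i, (c • z) i ^ d i = c ^ n * ∏ i, z i ^ d i := by
    simp only [Pi.smul_apply, smul_eq_mul, mul_pow]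
    rw [Finset.prod_mul_distrib, Finset.prod_pow_eq_pow_sum, hdeg]
  rw [this]; ring

lemma isHomog_pderiv {A : MvPolynomial (Fin 2) ℂ} {n : ℕ} (hA : A.IsHomogeneous n)
    (i : Fin 2) : (pderiv i A).IsHomogeneous (n - 1) := by
  rw [← A.support_sum_monomial_coeff, map_sum]
  apply IsHomogeneous.sum
  intro d hd
  rw [pderiv_monomial]
  rcases eq_or_ne (d i) 0 with h | h
  · rw [h]; rw [Nat.cast_zero, mul_zero, monomial_zero]; exact isHomogeneous_zero _ _ _
  · apply isHomogeneous_monomial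
    have hdeg : d.degree = n := by
      have h1 := hA (mem_support_iff.mp hd)
      rwa [Pi.one_def, ← Finsupp.degree_eq_weight_one] at h1
    have : (d - Finsupp.single i 1) + Finsupp.single i 1 = d := by
      ext j
      rcases eq_or_ne j i with rfl | hj
      · simp [Nat.sub_add_cancel (Nat.one_le_iff_ne_zero.mpr h)]
      · simp [Finsupp.single_apply, (Ne.symm hj)]
    have h2 : (d - Finsupp.single i 1).degree + 1 = n := by
      have h3 := congrArg (Finsupp.weight (1 : Fin 2 → ℕ)) this
      rw [map_add] at h3
      have h4 : (Finsupp.weight (1 : Fin 2 → ℕ)) (Finsupp.single i 1) = 1 := by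
        simp [Finsupp.weight_apply, Finsupp.sum_single_index]
      rw [h4, Pi.one_def, ← Finsupp.degree_eq_weight_one] at h3
      omega
    omega

lemma derivative_aeval_line (v : Fin 2 → Polynomial ℂ) (f : MvPolynomial (Fin 2) ℂ) :
    Polynomial.derivative (MvPolynomial.aeval v f) =
      ∑ i : Fin 2, MvPolynomial.aeval v (pderiv i f) * Polynomial.derivative (v i) := by
  induction f using MvPolynomial.induction_on with
  | C a => simp
  | add f g hf hg =>
      simp only [map_add, Polynomial.derivative_add, hf, hg, add_mul, Finset.sum_add_distrib]
  | mul_X f i hf =>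
      rw [map_mul, aeval_X, Polynomial.derivative_mul, hf]
      have : ∀ j : Fin 2, pderiv j (f * X i) = pderiv j f * X i + f * (if i = j then 1 else 0) := by
        intro j
        rw [pderiv_mul]
        congr 1
        rcases eq_or_ne i j with rfl | h
        · simp
        · simp [pderiv_X_of_ne (Ne.symm h), h]
      simp only [this, map_add, map_mul, aeval_X, Fin.sum_univ_two]
      rcases eq_or_ne i 0 with rfl | h0
      · norm_num
        ring
      · have : i = 1 := by omega
        subst this
        norm_num
        ring

/-- a nonconstant polynomial in two variables over `ℂ` has a nonzero zero. -/
lemma exists_nonzero_zero {d : MvPolynomial (Fin 2) ℂ} (hd : ∀ c : ℂ, d ≠ C c) :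
    ∃ z : Fin 2 → ℂ, z ≠ 0 ∧ eval z d = 0 := by
  classical
  set F : ℂ → Polynomial ℂ := fun lam => MvPolynomial.aeval ![Polynomial.X, Polynomial.C lam] d
    with hF
  have hFeval : ∀ (lam x : ℂ), Polynomial.eval x (F lam) = eval ![x, lam] d := by
    intro lam x
    rw [hF, polyEval_aeval']
    have hv : (fun i => Polynomial.eval x (![Polynomial.X, Polynomial.C lam] i)) = ![x, lam] := by
      funext i; fin_cases i <;> simp
    rw [hv]
  by_cases hcase : ∃ lam : ℂ, lam ≠ 0 ∧ ∀ c : ℂ, F lam ≠ Polynomial.C c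
  · obtain ⟨lam, hlam, hnc⟩ := hcase
    have hdeg : (F lam).degree ≠ 0 := fun h =>
      hnc _ (Polynomial.eq_C_of_degree_le_zero h.le)
    obtain ⟨x, hx⟩ := Complex.isAlgClosed.exists_root (F lam) hdeg
    refine ⟨![x, lam], ?_, ?_⟩
    · intro h
      exact hlam (by simpa using congrFun h 1)
    · rw [← hFeval]; exact hx
  · push_neg at hcase
    have claim1 : ∀ z : Fin 2 → ℂ, z 1 ≠ 0 → eval z d = eval ![0, z 1] d := by
      intro z hz
      obtain ⟨c, hc⟩ := hcase (z 1) hz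
      have e1 : eval z d = c := by
        have h1 := hFeval (z 1) (z 0)
        rw [hc, Polynomial.eval_C] at h1
        have hz2 : ![z 0, z 1] = z := by funext i; fin_cases i <;> rfl
        rw [hz2] at h1
        exact h1.symm
      have e2 : eval ![0, z 1] d = c := by
        have h2 := hFeval (z 1) 0
        rw [hc, Polynomial.eval_C] at h2
        exact h2.symm
      rw [e1, e2]
    set e : MvPolynomial (Fin 2) ℂ :=
      MvPolynomial.aeval ![0, MvPolynomial.X 1] d with he
    have heval_e : ∀ z : Fin 2 → ℂ, eval z e = eval ![0, z 1] d := by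
      intro z
      rw [he, mvEval_aeval]
      have hv : (fun i => eval z (![0, MvPolynomial.X 1] i)) = ![0, z 1] := by
        funext i; fin_cases i <;> simp
      rw [hv]
    have hde : d = e := by
      have h0 : (d - e) * X 1 = 0 := by
        apply MvPolynomial.funext (q := 0)
        intro z
        rw [eval_mul, eval_sub, eval_X, map_zero]
        rcases eq_or_ne (z 1) 0 with h | h
        · rw [h, mul_zero]
        · rw [heval_e, ← claim1 z h, sub_self, zero_mul]
      rcases mul_eq_zero.mp h0 with h | h
      · exact sub_eq_zero.mp h
      · exact absurd h (MvPolynomial.X_ne_zero 1)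
    set g : Polynomial ℂ := MvPolynomial.aeval ![0, Polynomial.X] d with hg
    have hgeval : ∀ x : ℂ, Polynomial.eval x g = eval ![0, x] d := by
      intro x
      rw [hg, polyEval_aeval']
      have hv : (fun i => Polynomial.eval x (![0, Polynomial.X] i)) = ![0, x] := by
        funext i; fin_cases i <;> simp
      rw [hv]
    by_cases hgc : ∀ c : ℂ, g ≠ Polynomial.C c
    · have hdeg : g.degree ≠ 0 := fun h => hgc _ (Polynomial.eq_C_of_degree_le_zero h.le)
      obtain ⟨x, hx⟩ := Complex.isAlgClosed.exists_root g hdeg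
      refine ⟨![1, x], ?_, ?_⟩
      · intro h
        have := congrFun h 0
        simp at this
      · rw [hde, heval_e, ← hgeval]
        exact hx
    · push_neg at hgc
      obtain ⟨c, hc⟩ := hgc
      exfalso
      apply hd c
      apply MvPolynomial.funext
      intro z
      rw [hde, heval_e, ← hgeval, hc, Polynomial.eval_C, eval_C]

lemma exists_singular_point {A : MvPolynomial (Fin 2) ℂ} (hA : A ≠ 0)
    (hsf : ¬ Squarefree A) :
    ∃ z : Fin 2 → ℂ, z ≠ 0 ∧ eval z A = 0 ∧
      eval z (pderiv 0 A) = 0 ∧ eval z (pderiv 1 A) = 0 := by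
  rw [Squarefree] at hsf
  push_neg at hsf
  obtain ⟨x, hxd, hxu⟩ := hsf
  have hx0 : x ≠ 0 := by
    rintro rfl
    exact hA (zero_dvd_iff.mp (dvd_trans (dvd_mul_right 0 0) hxd))
  obtain ⟨d, hdirr, hddvd⟩ := WfDvdMonoid.exists_irreducible_factor hxu hx0
  have hdd : d * d ∣ A := dvd_trans (mul_dvd_mul hddvd hddvd) hxd
  obtain ⟨e, he⟩ := hdd
  have hdvdA : d ∣ A := ⟨d * e, by rw [he]; ring⟩
  have hdvdP : ∀ i : Fin 2, d ∣ pderiv i A := by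
    intro i
    exact ⟨pderiv i d * e + pderiv i d * e + d * pderiv i e, by
      rw [he, pderiv_mul, pderiv_mul]; ring⟩
  have hdnc : ∀ c : ℂ, d ≠ C c := by
    intro c hc
    rcases eq_or_ne c 0 with rfl | hcne
    · rw [map_zero] at hc
      exact (hc ▸ hdirr).ne_zero rfl
    · exact hdirr.not_isUnit (hc ▸ (hcne.isUnit.map (C : ℂ →+* MvPolynomial (Fin 2) ℂ)))
  obtain ⟨z, hz0, hzd⟩ := exists_nonzero_zero hdnc
  have hev : ∀ B : MvPolynomial (Fin 2) ℂ, d ∣ B → eval z B = 0 := by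
    rintro B ⟨k, rfl⟩
    rw [eval_mul, hzd, zero_mul]
  exact ⟨z, hz0, hev _ hdvdA, hev _ (hdvdP 0), hev _ (hdvdP 1)⟩

end Stmt11Aux

set_option maxHeartbeats 1600000 in
open Stmt11Aux in
/-- Let `p, q` be real binary forms of the same degree `n ≥ 1` with no common
projective zero, such that for every `(λ : μ) ∈ ℙ¹(ℝ)` all projective zeros of
`λp + μq` are real.  Then all zeros of `p` are simple, i.e. `p` is squarefree as a
complex binary form (equivalently, the derivative of `p/q` is nonzero at every
zero of `p`). -/
theorem stmt_11 (n : ℕ) (hn : 0 < n) (p q : MvPolynomial (Fin 2) ℝ)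
    (hph : p.IsHomogeneous n) (hqh : q.IsHomogeneous n)
    (hnc : ∀ z : Fin 2 → ℂ, z ≠ 0 →
      ¬ (eval z (map (algebraMap ℝ ℂ) p) = 0 ∧ eval z (map (algebraMap ℝ ℂ) q) = 0))
    (hreal : ∀ lam mu : ℝ, ¬ (lam = 0 ∧ mu = 0) →
      ∀ z : Fin 2 → ℂ, z ≠ 0 →
        eval z (map (algebraMap ℝ ℂ) (lam • p + mu • q)) = 0 → IsRealProjPoint2 z) :
    Squarefree (map (algebraMap ℝ ℂ) p) := by
  by_contra hsf
  set A : MvPolynomial (Fin 2) ℂ := map (algebraMap ℝ ℂ) p with hA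
  set B : MvPolynomial (Fin 2) ℂ := map (algebraMap ℝ ℂ) q with hB
  have hcomb : ∀ (lam mu : ℝ) (z : Fin 2 → ℂ),
      eval z (map (algebraMap ℝ ℂ) (lam • p + mu • q)) =
        (lam : ℂ) * eval z A + (mu : ℂ) * eval z B := by
    intro lam mu z
    rw [smul_eq_C_mul, smul_eq_C_mul, map_add, map_mul, map_mul, map_C, map_C]
    simp [hA, hB, Complex.coe_algebraMap]
  -- A is not zero
  have hAne : A ≠ 0 := by
    intro h0
    have hz : (![1, Complex.I] : Fin 2 → ℂ) ≠ 0 := by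
      intro h; simpa using congrFun h 0
    have := hreal 1 0 (by simp) ![1, Complex.I] hz
      (by rw [hcomb, h0]; simp)
    obtain ⟨v, c, hc, hvc⟩ := this
    have h0' := congrFun hvc 0
    have h1' := congrFun hvc 1
    simp only [Matrix.cons_val_zero, Matrix.cons_val_one, Matrix.head_cons, Pi.smul_apply,
      smul_eq_mul] at h0' h1'
    -- 1 = c * v0, I = c * v1
    have key : (v 1 : ℂ) = (v 0 : ℂ) * Complex.I := by
      apply mul_left_cancel₀ hc
      rw [← h1', ← mul_assoc, ← h0', one_mul]
    have him := congrArg Complex.im key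
    simp at him
    rw [← him] at h0'
    simp at h0'
  -- singular point
  have hAh : A.IsHomogeneous n := hph.map _
  obtain ⟨z₀, hz₀ne, hz₀A, hz₀P0, hz₀P1⟩ := exists_singular_point hAne hsf
  have hz₀real := hreal 1 0 (by simp) z₀ hz₀ne (by rw [hcomb]; rw [hz₀A]; simp)
  obtain ⟨w, c, hcne, hzw⟩ := hz₀real
  set wc : Fin 2 → ℂ := fun i => (w i : ℂ) with hwc
  have hwcne : wc ≠ 0 := by
    intro h
    apply hz₀ne
    rw [hzw, h, smul_zero]
  -- vanishing at the real point wc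
  have hwcA : eval wc A = 0 := by
    have := hz₀A
    rw [hzw, eval_smul_isHomog hAh] at this
    exact (mul_eq_zero.mp this).resolve_left (pow_ne_zero n hcne)
  have hwcP : ∀ i : Fin 2, eval wc (pderiv i A) = 0 := by
    intro i
    have hder := isHomog_pderiv hAh i
    have hvan : eval z₀ (pderiv i A) = 0 := by
      fin_cases i
      · exact hz₀P0
      · exact hz₀P1
    rw [hzw, eval_smul_isHomog hder] at hvan
    exact (mul_eq_zero.mp hvan).resolve_left (pow_ne_zero _ hcne)
  have hwcB : eval wc B ≠ 0 := fun h => hnc wc hwcne ⟨hwcA, h⟩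
  -- the direction b and the line
  set b : Fin 2 → ℝ := ![-(w 1), w 0] with hb
  set zl : ℂ → (Fin 2 → ℂ) := fun u => fun i => (w i : ℂ) + u * (b i : ℂ) with hzl
  have hwex : w 0 ≠ 0 ∨ w 1 ≠ 0 := by
    by_contra h
    push_neg at h
    apply hwcne
    funext i
    fin_cases i <;> simp [hwc, h.1, h.2]
  have hwsq : 0 < w 0 ^ 2 + w 1 ^ 2 := by
    rcases hwex with h | h <;> positivity
  have hzl0 : ∀ u : ℂ, zl u ≠ 0 := by
    intro u h
    have e0 := congrFun h 0
    have e1 := congrFun h 1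
    simp only [hzl, hb, Matrix.cons_val_zero, Matrix.cons_val_one, Matrix.head_cons,
      Complex.ofReal_neg, Pi.zero_apply] at e0 e1
    have key : ((w 0 ^ 2 + w 1 ^ 2 : ℝ) : ℂ) = 0 := by
      push_cast
      linear_combination (w 0 : ℂ) * e0 + (w 1 : ℂ) * e1
    rw [Complex.ofReal_eq_zero] at key
    exact hwsq.ne' key
  have hnotreal : ∀ u : ℂ, u.im ≠ 0 → ¬ IsRealProjPoint2 (zl u) := by
    rintro u him ⟨v, c', hc'ne, hveq⟩
    have e0 := congrFun hveq 0
    have e1 := congrFun hveq 1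
    simp only [hzl, hb, Matrix.cons_val_zero, Matrix.cons_val_one, Matrix.head_cons,
      Complex.ofReal_neg, Pi.smul_apply, smul_eq_mul] at e0 e1
    have key : ((v 1 * w 0 - v 0 * w 1 : ℝ) : ℂ) = u * ((v 1 * w 1 + v 0 * w 0 : ℝ) : ℂ) := by
      push_cast
      linear_combination (v 1 : ℂ) * e0 - (v 0 : ℂ) * e1
    have imkey := congrArg Complex.im key
    simp only [Complex.ofReal_im, Complex.mul_im, Complex.ofReal_re, Complex.ofReal_im,
      mul_zero, add_zero, zero_add] at imkey
    have hdot : v 1 * w 1 + v 0 * w 0 = 0 := by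
      rcases mul_eq_zero.mp imkey.symm with h | h
      · exact absurd h him
      · exact h
    have rekey := congrArg Complex.re key
    simp only [Complex.ofReal_re, Complex.mul_re, Complex.ofReal_im, mul_zero, sub_zero] at rekey
    rw [hdot] at rekey
    simp only [mul_zero] at rekey
    have hv0 : v 0 * (w 0 ^ 2 + w 1 ^ 2) = 0 := by
      linear_combination w 0 * hdot - w 1 * rekey
    have hv1 : v 1 * (w 0 ^ 2 + w 1 ^ 2) = 0 := by
      linear_combination w 1 * hdot + w 0 * rekey
    have hv0' : v 0 = 0 := by
      rcases mul_eq_zero.mp hv0 with h | h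
      · exact h
      · exact absurd h hwsq.ne'
    have hv1' : v 1 = 0 := by
      rcases mul_eq_zero.mp hv1 with h | h
      · exact h
      · exact absurd h hwsq.ne'
    apply hzl0 u
    rw [hveq]
    have : (fun i => ((v i : ℂ))) = 0 := by
      funext i
      fin_cases i <;> simp [hv0', hv1']
    rw [this, smul_zero]
  -- the polynomials along the line
  set vr : Fin 2 → Polynomial ℝ :=
    ![Polynomial.C (w 0) + Polynomial.C (-(w 1)) * Polynomial.X,
      Polynomial.C (w 1) + Polynomial.C (w 0) * Polynomial.X] with hvr
  set Pc := (MvPolynomial.aeval vr p).map (algebraMap ℝ ℂ) with hPc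
  set Qc := (MvPolynomial.aeval vr q).map (algebraMap ℝ ℂ) with hQc
  have hPeval : ∀ u : ℂ, Polynomial.eval u Pc = eval (zl u) A := by
    intro u
    rw [hPc, polyEval_map_aeval]
    have hv : (fun i => Polynomial.eval u ((vr i).map (algebraMap ℝ ℂ))) = zl u := by
      funext i
      fin_cases i <;>
        · simp [hvr, hzl, hb]
          push_cast
          ring
    rw [hv]
  have hQeval : ∀ u : ℂ, Polynomial.eval u Qc = eval (zl u) B := by
    intro u
    rw [hQc, polyEval_map_aeval]
    have hv : (fun i => Polynomial.eval u ((vr i).map (algebraMap ℝ ℂ))) = zl u := by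
      funext i
      fin_cases i <;>
        · simp [hvr, hzl, hb]
          push_cast
          ring
    rw [hv]
  set vc : Fin 2 → Polynomial ℂ :=
    ![Polynomial.C ((w 0 : ℂ)) + Polynomial.C (-(w 1 : ℂ)) * Polynomial.X,
      Polynomial.C ((w 1 : ℂ)) + Polynomial.C ((w 0 : ℂ)) * Polynomial.X] with hvc2
  have hPcA : Pc = MvPolynomial.aeval vc A := by
    apply Polynomial.funext
    intro u
    rw [hPeval u, polyEval_aeval']
    have hv : (fun i => Polynomial.eval u (vc i)) = zl u := by
      funext i
      fin_cases i <;>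
        · simp [hvc2, hzl, hb]
          push_cast
          ring
    rw [hv]
  have hzl0wc : zl 0 = wc := by
    funext i
    simp [hzl, hwc]
  have coeff0 : Pc.coeff 0 = 0 := by
    rw [Polynomial.coeff_zero_eq_eval_zero, hPeval, hzl0wc, hwcA]
  have coeff1 : Pc.coeff 1 = 0 := by
    have h1 : (Polynomial.derivative Pc).coeff 0 = Pc.coeff 1 := by
      simp [Polynomial.coeff_derivative]
    rw [← h1, Polynomial.coeff_zero_eq_eval_zero, hPcA, derivative_aeval_line,
      Polynomial.eval_finset_sum]
    apply Finset.sum_eq_zero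
    intro i _
    rw [Polynomial.eval_mul, polyEval_aeval']
    have hv : (fun j => Polynomial.eval 0 (vc j)) = wc := by
      funext j
      fin_cases j <;> simp [hvc2, hwc]
    rw [hv, hwcP i, zero_mul]
  have hPcne : Pc ≠ 0 := by
    intro h
    have hvan : Polynomial.eval Complex.I Pc = 0 := by rw [h]; simp
    rw [hPeval] at hvan
    have hr := hreal 1 0 (by simp) (zl Complex.I) (hzl0 _)
      (by rw [hcomb, hvan]; simp)
    exact hnotreal Complex.I (by simp) hr
  set m := Polynomial.rootMultiplicity 0 Pc with hm
  have hm2 : 2 ≤ m := by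
    rw [hm, Polynomial.le_rootMultiplicity_iff hPcne, map_zero, sub_zero,
      Polynomial.X_pow_dvd_iff]
    intro d hd
    interval_cases d
    · exact coeff0
    · exact coeff1
  obtain ⟨R, hR⟩ : (Polynomial.X : Polynomial ℂ) ^ m ∣ Pc := by
    have := Polynomial.pow_rootMultiplicity_dvd Pc 0
    rwa [map_zero, sub_zero] at this
  have hR0 : Polynomial.eval 0 R ≠ 0 := by
    intro h
    have hXdvd : (Polynomial.X : Polynomial ℂ) ∣ R := by
      rw [Polynomial.X_dvd_iff, Polynomial.coeff_zero_eq_eval_zero]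
      exact h
    obtain ⟨R', hR'⟩ := hXdvd
    have hdvd : (Polynomial.X : Polynomial ℂ) ^ (m + 1) ∣ Pc := ⟨R', by rw [hR, hR']; ring⟩
    have h2 : m + 1 ≤ Polynomial.rootMultiplicity 0 Pc := by
      rw [Polynomial.le_rootMultiplicity_iff hPcne, map_zero, sub_zero]
      exact hdvd
    rw [← hm] at h2
    omega
  have hQ0ne : Polynomial.eval 0 Qc ≠ 0 := by
    rw [hQeval, hzl0wc]
    exact hwcB
  have hQ0im : (Polynomial.eval 0 Qc).im = 0 := by
    rw [← Polynomial.coeff_zero_eq_eval_zero, hQc, Polynomial.coeff_map]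
    simp [Complex.coe_algebraMap]
  have hRm : Polynomial.eval 0 R = Pc.coeff m := by
    have h3 := Polynomial.coeff_X_pow_mul R m 0
    rw [zero_add] at h3
    rw [hR, h3, Polynomial.coeff_zero_eq_eval_zero]
  have hRim : (Polynomial.eval 0 R).im = 0 := by
    rw [hRm, hPc, Polynomial.coeff_map]
    simp [Complex.coe_algebraMap]
  set cr : ℝ := (Polynomial.eval 0 R).re / (Polynomial.eval 0 Qc).re with hcr
  have hcreq : (Polynomial.eval 0 R) / (Polynomial.eval 0 Qc) = (cr : ℂ) := by
    have h1 : Polynomial.eval 0 R = (((Polynomial.eval 0 R).re : ℝ) : ℂ) :=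
      Complex.ext (by simp) (by simp [hRim])
    have h2 : Polynomial.eval 0 Qc = (((Polynomial.eval 0 Qc).re : ℝ) : ℂ) :=
      Complex.ext (by simp) (by simp [hQ0im])
    rw [h1, h2, hcr, Complex.ofReal_div]
  have hcrne : cr ≠ 0 := by
    intro h
    rw [h, Complex.ofReal_zero] at hcreq
    rcases div_eq_zero_iff.mp hcreq with h' | h'
    · exact hR0 h'
    · exact hQ0ne h'
  -- the analytic part on the upper half plane
  set S : Set ℂ := {u : ℂ | 0 < u.im} with hSdef
  have hSpre : IsPreconnected S :=
    (convex_halfSpace_gt (LinearMap.isLinear Complex.imLm) 0).isPreconnected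
  have hQS : ∀ u ∈ S, Polynomial.eval u Qc ≠ 0 := by
    intro u hu h0
    have hr := hreal 0 1 (by simp) (zl u) (hzl0 u)
      (by rw [hcomb, ← hQeval, h0]; simp)
    exact hnotreal u (ne_of_gt hu) hr
  set f : ℂ → ℝ := fun u => ((Polynomial.eval u Pc) / (Polynomial.eval u Qc)).im with hf
  have hfcont : ContinuousOn f S :=
    Complex.continuous_im.comp_continuousOn
      ((Pc.continuousOn).div (Qc.continuousOn) hQS)
  have hfne : ∀ u ∈ S, f u ≠ 0 := by
    intro u hu h0
    set ρ : ℝ := ((Polynomial.eval u Pc) / (Polynomial.eval u Qc)).re with hρ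
    have hdiv : Polynomial.eval u Pc / Polynomial.eval u Qc = (ρ : ℂ) :=
      Complex.ext (by simp [hρ]) (by simpa using h0)
    have hPQ : Polynomial.eval u Pc = (ρ : ℂ) * Polynomial.eval u Qc :=
      (div_eq_iff (hQS u hu)).mp hdiv
    have hr := hreal 1 (-ρ) (by simp) (zl u) (hzl0 u)
      (by rw [hcomb, ← hPeval, ← hQeval, hPQ]; push_cast; ring)
    exact hnotreal u (ne_of_gt hu) hr
  -- continuity of the cofactor quotient at 0
  have hhcont : ContinuousAt (fun u : ℂ => Polynomial.eval u R / Polynomial.eval u Qc) 0 :=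
    ContinuousAt.div (R.continuousAt) (Qc.continuousAt) hQ0ne
  obtain ⟨δ₀, hδ₀pos, hδ₀⟩ := Metric.continuousAt_iff.mp hhcont (|cr| / 2) (by positivity)
  set δ : ℝ := δ₀ / 2 with hδdef
  have hδpos : 0 < δ := by positivity
  have hδlt : δ < δ₀ := by rw [hδdef]; linarith
  have hmR : (2 : ℝ) ≤ (m : ℝ) := by exact_mod_cast hm2
  have hmRpos : (0 : ℝ) < (m : ℝ) := by linarith
  set θ₁ : ℝ := Real.pi / (2 * m) with hθ₁
  set θ₂ : ℝ := 3 * Real.pi / (2 * m) with hθ₂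
  have hπ := Real.pi_pos
  have hθ₁mem : 0 < θ₁ ∧ θ₁ < Real.pi := by
    constructor
    · rw [hθ₁]; positivity
    · rw [hθ₁, div_lt_iff₀ (by positivity)]
      nlinarith
  have hθ₂mem : 0 < θ₂ ∧ θ₂ < Real.pi := by
    constructor
    · rw [hθ₂]; positivity
    · rw [hθ₂, div_lt_iff₀ (by positivity)]
      nlinarith
  have hexp : ∀ θ : ℝ, Complex.exp ((θ : ℂ) * Complex.I)
      = ((Real.cos θ : ℝ) : ℂ) + ((Real.sin θ : ℝ) : ℂ) * Complex.I := by
    intro θ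
    rw [Complex.exp_mul_I, Complex.ofReal_cos, Complex.ofReal_sin]
  set z₁ : ℂ := (δ : ℂ) * Complex.exp ((θ₁ : ℂ) * Complex.I) with hz₁
  set z₂ : ℂ := (δ : ℂ) * Complex.exp ((θ₂ : ℂ) * Complex.I) with hz₂
  have hz₁S : z₁ ∈ S := by
    have : z₁.im = δ * Real.sin θ₁ := by
      rw [hz₁]
      simp [Complex.mul_im, Complex.exp_ofReal_mul_I_im, Complex.exp_ofReal_mul_I_re]
    rw [hSdef, Set.mem_setOf_eq, this]
    exact mul_pos hδpos (Real.sin_pos_of_pos_of_lt_pi hθ₁mem.1 hθ₁mem.2)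
  have hz₂S : z₂ ∈ S := by
    have : z₂.im = δ * Real.sin θ₂ := by
      rw [hz₂]
      simp [Complex.mul_im, Complex.exp_ofReal_mul_I_im, Complex.exp_ofReal_mul_I_re]
    rw [hSdef, Set.mem_setOf_eq, this]
    exact mul_pos hδpos (Real.sin_pos_of_pos_of_lt_pi hθ₂mem.1 hθ₂mem.2)
  -- powers
  have hpow : ∀ θ : ℝ, ((δ : ℂ) * Complex.exp ((θ : ℂ) * Complex.I)) ^ m
      = ((δ ^ m : ℝ) : ℂ) * Complex.exp (((m * θ : ℝ) : ℂ) * Complex.I) := by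
    intro θ
    rw [mul_pow, ← Complex.exp_nat_mul]
    push_cast
    ring_nf
  have hpow1 : z₁ ^ m = ((δ ^ m : ℝ) : ℂ) * Complex.I := by
    rw [hz₁, hpow]
    have harg : (m : ℝ) * θ₁ = Real.pi / 2 := by
      rw [hθ₁]
      field_simp
    rw [harg, hexp]
    simp
  have hpow2 : z₂ ^ m = ((δ ^ m : ℝ) : ℂ) * (-Complex.I) := by
    rw [hz₂, hpow]
    have harg : (m : ℝ) * θ₂ = Real.pi + Real.pi / 2 := by
      rw [hθ₂]
      field_simp
      ring
    rw [harg, hexp, Real.cos_add, Real.sin_add]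
    simp
  -- distance estimates
  have hdist : ∀ θ : ℝ, dist ((δ : ℂ) * Complex.exp ((θ : ℂ) * Complex.I)) 0 < δ₀ := by
    intro θ
    rw [dist_zero_right]
    have : ‖(δ : ℂ) * Complex.exp ((θ : ℂ) * Complex.I)‖ = δ := by
      rw [norm_mul, Complex.norm_real]
      have h2 : ‖Complex.exp ((θ : ℂ) * Complex.I)‖ = 1 := by
        simpa using Complex.abs_exp_ofReal_mul_I θ
      rw [h2, mul_one, Real.norm_eq_abs, abs_of_pos hδpos]
    rw [this]
    exact hδlt
  have hre_close : ∀ u : ℂ, dist u 0 < δ₀ →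
      |(Polynomial.eval u R / Polynomial.eval u Qc).re - cr| < |cr| / 2 := by
    intro u hu
    have h1 := hδ₀ hu
    rw [hcreq] at h1
    calc |(Polynomial.eval u R / Polynomial.eval u Qc).re - cr|
        = |((Polynomial.eval u R / Polynomial.eval u Qc) - (cr : ℂ)).re| := by
          rw [Complex.sub_re, Complex.ofReal_re]
      _ ≤ ‖(Polynomial.eval u R / Polynomial.eval u Qc) - (cr : ℂ)‖ :=
          Complex.abs_re_le_norm _
      _ < |cr| / 2 := by rwa [Complex.dist_eq] at h1
  have hre1 := hre_close z₁ (hz₁ ▸ hdist θ₁)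
  have hre2 := hre_close z₂ (hz₂ ▸ hdist θ₂)
  set a₁ : ℝ := (Polynomial.eval z₁ R / Polynomial.eval z₁ Qc).re with ha₁
  set a₂ : ℝ := (Polynomial.eval z₂ R / Polynomial.eval z₂ Qc).re with ha₂
  -- values of f at the two test points
  have hfval : ∀ u : ℂ, Polynomial.eval u Pc / Polynomial.eval u Qc
      = u ^ m * (Polynomial.eval u R / Polynomial.eval u Qc) := by
    intro u
    rw [hR, Polynomial.eval_mul, Polynomial.eval_pow, Polynomial.eval_X, mul_div_assoc]
  have hfval1 : f z₁ = δ ^ m * a₁ := by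
    rw [hf]
    simp only
    rw [hfval, hpow1, mul_assoc, im_ofReal_mul_I_mul]
  have hfval2 : f z₂ = -(δ ^ m * a₂) := by
    rw [hf]
    simp only
    rw [hfval, hpow2, mul_assoc, im_ofReal_mul_negI_mul]
  -- sign analysis
  have hδm : 0 < δ ^ m := pow_pos hδpos m
  have habs1 := abs_lt.mp hre1
  have habs2 := abs_lt.mp hre2
  have hprod : 0 < a₁ * a₂ := by
    rcases lt_or_gt_of_ne hcrne with hcneg | hcpos
    · rw [abs_of_neg hcneg] at habs1 habs2
      obtain ⟨l1, r1⟩ := habs1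
      obtain ⟨l2, r2⟩ := habs2
      have h1 : a₁ < cr / 2 := by linarith
      have h2 : a₂ < cr / 2 := by linarith
      nlinarith
    · rw [abs_of_pos hcpos] at habs1 habs2
      obtain ⟨l1, r1⟩ := habs1
      obtain ⟨l2, r2⟩ := habs2
      have h1 : cr / 2 < a₁ := by linarith
      have h2 : cr / 2 < a₂ := by linarith
      nlinarith
  have hsign : f z₁ * f z₂ < 0 := by
    rw [hfval1, hfval2]
    nlinarith [mul_pos (mul_pos hδm hδm) hprod]
  rcases mul_neg_iff.mp hsign with ⟨h1, h2⟩ | ⟨h1, h2⟩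
  · have hsub := hSpre.intermediate_value hz₂S hz₁S hfcont
    obtain ⟨u, huS, hu0⟩ := hsub ⟨le_of_lt h2, le_of_lt h1⟩
    exact hfne u huS hu0
  · have hsub := hSpre.intermediate_value hz₁S hz₂S hfcont
    obtain ⟨u, huS, hu0⟩ := hsub ⟨le_of_lt h1, le_of_lt h2⟩
    exact hfne u huS hu0
end
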